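/- T₄ is a test set for L₄. That is, for any alphabet Γ and any two monoid homomorphisms f, g from Σ₄* to Γ* (i.e., string homomorphisms), if f(w) = g(w) for every word w ∈ T₄, then f(w) = g(w) for every word w ∈ L₄. -/

import Mathlib

/-- The 16-letter alphabet Σ₄ = {aᵢ, āᵢ, bᵢ, b̄ᵢ | i ∈ {1,2,3,4}} (indices as `Fin 4`). -/
inductive Sigma4 where
  | a (i : Fin 4)
  | abar (i : Fin 4)
  | b (i : Fin 4)
  | bbar (i : Fin 4)
deriving DecidableEq

/-- The letter `xᵢ`: `aᵢ` if the choice is `true`, `bᵢ` if it is `false`. -/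
def xLetter (c : Bool) (i : Fin 4) : Sigma4 := if c then Sigma4.a i else Sigma4.b i

/-- The letter `x̄ᵢ`: `āᵢ` if the choice is `true`, `b̄ᵢ` if it is `false`. -/
def xbarLetter (c : Bool) (i : Fin 4) : Sigma4 := if c then Sigma4.abar i else Sigma4.bbar i

/-- The word `x₄ x₃ x₂ x₁ x̄₁ x̄₂ x̄₃ x̄₄` determined by the choice function `c`. -/
def word4 (c : Fin 4 → Bool) : List Sigma4 :=
  [xLetter (c 3) 3, xLetter (c 2) 2, xLetter (c 1) 1, xLetter (c 0) 0,
   xbarLetter (c 0) 0, xbarLetter (c 1) 1, xbarLetter (c 2) 2, xbarLetter (c 3) 3]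

/-- The language L₄ of the 16 words `x₄x₃x₂x₁x̄₁x̄₂x̄₃x̄₄`. -/
def L4 : Set (List Sigma4) := { w | ∃ c : Fin 4 → Bool, w = word4 c }

/-- T₄ = L₄ minus the all-`b` word `b₄b₃b₂b₁b̄₁b̄₂b̄₃b̄₄`. -/
def T4 : Set (List Sigma4) := L4 \ {word4 (fun _ => false)}

open FreeGroup in
lemma my_reduce_cons_ne {α : Type*} [DecidableEq α] (x : α × Bool) (L : List (α × Bool))
    (h : reduce L = L) (hne : ∀ hd ∈ L.head?, ¬(x.1 = hd.1 ∧ x.2 = !hd.2)) :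
    reduce (x :: L) = x :: L := by
  rw [FreeGroup.reduce.cons, h]
  cases L with
  | nil => rfl
  | cons hd tl =>
    have := hne hd rfl
    simp only [this, if_false]

open FreeGroup in
lemma my_reduce_pos {α : Type*} [DecidableEq α] (l : List α) :
    reduce (l.map (·, true)) = l.map (·, true) := by
  induction l with
  | nil => rfl
  | cons a l ih =>
    rw [List.map_cons]
    refine my_reduce_cons_ne _ _ ih ?_
    rintro hd hhd ⟨-, h2⟩
    cases l with
    | nil => simp at hhd
    | cons b l =>
      simp only [List.map_cons, List.head?_cons, Option.mem_def, Option.some.injEq] at hhd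
      rw [← hhd] at h2
      simp at h2

/-- The canonical embedding of the free monoid into the free group. -/
def iotaFG (α : Type*) : FreeMonoid α →* FreeGroup α := FreeMonoid.lift FreeGroup.of

lemma iotaFG_apply {α : Type*} (l : List α) :
    iotaFG α (FreeMonoid.ofList l) = FreeGroup.mk (l.map (·, true)) := by
  induction l with
  | nil => simp [iotaFG, FreeMonoid.ofList_nil]; rfl
  | cons a l ih =>
    rw [FreeMonoid.ofList_cons, map_mul, ih, List.map_cons]
    have : iotaFG α (FreeMonoid.of a) = FreeGroup.mk [(a, true)] := by
      simp [iotaFG]; rfl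
    rw [this, FreeGroup.mul_mk]
    rfl

lemma iotaFG_injective (α : Type*) : Function.Injective (iotaFG α) := by
  classical
  intro x y h
  have hx : iotaFG α (FreeMonoid.ofList (FreeMonoid.toList x)) = iotaFG α (FreeMonoid.ofList (FreeMonoid.toList y)) := by
    simpa [FreeMonoid.ofList_toList] using h
  rw [iotaFG_apply, iotaFG_apply] at hx
  have := congrArg FreeGroup.toWord hx
  rw [FreeGroup.toWord_mk, FreeGroup.toWord_mk, my_reduce_pos, my_reduce_pos] at this
  have hinj : Function.Injective (fun a : α => (a, true)) := fun a b hab => by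
    simpa using congrArg Prod.fst hab
  have := List.map_injective_iff.2 hinj this
  exact FreeMonoid.toList.injective this

lemma freeGroup_comm_of_subsingleton {β : Type*} [Subsingleton β] (x y : FreeGroup β) :
    Commute x y := by
  have key : ∀ (a : β) (w : FreeGroup β), Commute (FreeGroup.of a) w := by
    intro a w
    induction w using FreeGroup.induction_on with
    | C1 => exact Commute.one_right _
    | of b =>
        have : (FreeGroup.of b : FreeGroup β) = FreeGroup.of a := by rw [Subsingleton.elim b a]
        rw [this]
    | inv_of b h => exact h.inv_right
    | mul w₁ w₂ h1 h2 => exact h1.mul_right h2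
  induction x using FreeGroup.induction_on with
  | C1 => exact Commute.one_left _
  | of a => exact key a y
  | inv_of a h => exact (key a y).inv_left
  | mul x₁ x₂ h1 h2 => exact h1.mul_left h2

open FreeGroup in
lemma freeGroup_comm_of_center {β : Type*} (z : FreeGroup β) (hz1 : z ≠ 1)
    (hz : ∀ g : FreeGroup β, z * g = g * z) (x y : FreeGroup β) : Commute x y := by
  classical
  by_cases hss : ∀ a b : β, a = b
  · haveI : Subsingleton β := ⟨hss⟩
    exact freeGroup_comm_of_subsingleton x y
  · exfalso
    push_neg at hss
    obtain ⟨a, b, hab⟩ := hss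
    set w := z.toWord with hw
    have hwred : reduce w = w := FreeGroup.reduce_toWord z
    have hwne : w ≠ [] := by
      rw [hw, Ne, FreeGroup.toWord_eq_nil_iff]; exact hz1
    obtain ⟨hd, tl, hwc⟩ : ∃ hd tl, w = hd :: tl := by
      cases h : w with
      | nil => exact absurd h hwne
      | cons hd tl => exact ⟨hd, tl, rfl⟩
    set c := hd.1 with hc
    set d : β := if c = a then b else a with hd_def
    have hdc : d ≠ c := by
      rw [hd_def]
      split
      · rename_i h; rw [h]; exact fun h' => hab h'.symm
      · rename_i h; exact fun h' => h h'.symm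
    set last := w.getLast hwne with hlast
    set t : Bool := if last.1 = d then !last.2 else true with ht_def
    -- invRev w is reduced and nonempty with head (last.1, !last.2)
    have hinvred : reduce (invRev w) = invRev w := by
      rw [FreeGroup.reduce_invRev, hwred]
    have hinv_head : (invRev w).head? = some (last.1, !last.2) := by
      rw [FreeGroup.invRev]
      rw [List.head?_reverse]
      rw [List.getLast?_map]
      rw [List.getLast?_eq_getLast (l := w) hwne]
      rfl
    -- Step: reduce ((d,t) :: invRev w) = (d,t) :: invRev w
    have hstep1 : reduce ((d, t) :: invRev w) = (d, t) :: invRev w := by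
      refine my_reduce_cons_ne _ _ hinvred ?_
      intro p hp hcontra
      rw [hinv_head] at hp
      cases hp
      obtain ⟨h1, h2⟩ := hcontra
      simp only at h1 h2
      rw [Bool.not_not] at h2
      rw [ht_def] at h2
      rw [h1] at h2
      simp at h2
    -- hence w ++ [(d, !t)] is reduced
    have hinv_eq : invRev (w ++ [(d, !t)]) = (d, t) :: invRev w := by
      simp [FreeGroup.invRev]
    have hstep2 : reduce (w ++ [(d, !t)]) = w ++ [(d, !t)] := by
      have h1 : reduce (invRev (w ++ [(d, !t)])) = invRev (w ++ [(d, !t)]) := by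
        rw [hinv_eq, hstep1]
      have h2 := FreeGroup.reduce_invRev (w := invRev (w ++ [(d, !t)]))
      rw [h1, FreeGroup.invRev_invRev] at h2
      exact h2
    -- full word reduced
    have hstep3 : reduce ((d, t) :: (w ++ [(d, !t)])) = (d, t) :: (w ++ [(d, !t)]) := by
      refine my_reduce_cons_ne _ _ hstep2 ?_
      intro p hp hcontra
      rw [hwc] at hp
      simp only [List.cons_append, List.head?_cons, Option.mem_def, Option.some.injEq] at hp
      rw [← hp] at hcontra
      exact hdc hcontra.1
    -- contradiction via centrality
    have hxz : FreeGroup.mk [(d, t)] * z * (FreeGroup.mk [(d, t)])⁻¹ = z := by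
      rw [← hz (FreeGroup.mk [(d, t)])]
      group
    have hinv_single : invRev [(d, t)] = [(d, !t)] := by simp [FreeGroup.invRev]
    have hz_mk : z = FreeGroup.mk w := (FreeGroup.mk_toWord).symm
    have hprod : FreeGroup.mk [(d, t)] * z * (FreeGroup.mk [(d, t)])⁻¹
        = FreeGroup.mk ((d, t) :: (w ++ [(d, !t)])) := by
      rw [hz_mk, FreeGroup.inv_mk, hinv_single, FreeGroup.mul_mk, FreeGroup.mul_mk]
      rfl
    have : ((d, t) :: (w ++ [(d, !t)])) = w := by
      have := congrArg FreeGroup.toWord (hprod.symm.trans hxz)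
      rw [FreeGroup.toWord_mk, hstep3] at this
      exact this
    have hlen := congrArg List.length this
    simp at hlen
    omega

lemma freeGroup_ct {β : Type u} (r x y : FreeGroup β) (hr : r ≠ 1)
    (hx : Commute r x) (hy : Commute r y) : Commute x y := by
  set C := Subgroup.centralizer ({r} : Set (FreeGroup β)) with hC
  have hmem : ∀ g : FreeGroup β, Commute r g → g ∈ C := by
    intro g hg
    rw [hC, Subgroup.mem_centralizer_iff]
    rintro h ⟨rfl⟩
    exact hg.eq
  have hrC : r ∈ C := hmem r (Commute.refl r)
  haveI : IsFreeGroup C := inferInstance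
  set e : C ≃* FreeGroup (IsFreeGroup.Generators C) := IsFreeGroup.toFreeGroup C with he
  set z : C := ⟨r, hrC⟩ with hzdef
  have hz1 : e z ≠ 1 := by
    intro h
    have : z = 1 := e.injective (by simpa using h)
    exact hr (congrArg Subtype.val this)
  have hzc : ∀ g : FreeGroup (IsFreeGroup.Generators C), e z * g = g * e z := by
    intro g
    have : e z * e (e.symm g) = e (e.symm g) * e z := by
      rw [← map_mul, ← map_mul]
      congr 1
      have hmm : ((e.symm g : C) : FreeGroup β) ∈ C := (e.symm g).2
      have h2 := Subgroup.mem_centralizer_iff.1 hmm r (Set.mem_singleton r)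
      exact Subtype.ext (by simpa [hzdef] using h2)
    simpa using this
  have hcomm := freeGroup_comm_of_center (e z) hz1 hzc (e ⟨x, hmem x hx⟩) (e ⟨y, hmem y hy⟩)
  have : (⟨x, hmem x hx⟩ : C) * ⟨y, hmem y hy⟩ = ⟨y, hmem y hy⟩ * ⟨x, hmem x hx⟩ :=
    e.injective (by rw [map_mul, map_mul]; exact hcomm.eq)
  exact congrArg Subtype.val this

section GroupSteps
variable {K : Type*} [Group K]

lemma my_step1 (A A' Ab Ab' B B' Bb Bb' P Q : K)
    (ha : A * P * Ab = A' * Q * Ab') (hb : B * P * Bb = B' * Q * Bb') :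
    (B⁻¹ * B' * A'⁻¹ * A) * P * (Ab * Ab'⁻¹ * Bb' * Bb⁻¹) = P := by
  have hQ : B' * (A'⁻¹ * (A * P * Ab) * Ab'⁻¹) * Bb' = B * P * Bb := by
    rw [ha, hb]; group
  calc (B⁻¹ * B' * A'⁻¹ * A) * P * (Ab * Ab'⁻¹ * Bb' * Bb⁻¹)
      = B⁻¹ * (B' * (A'⁻¹ * (A * P * Ab) * Ab'⁻¹) * Bb') * Bb⁻¹ := by group
    _ = B⁻¹ * (B * P * Bb) * Bb⁻¹ := by rw [hQ]
    _ = P := by group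

lemma my_step2 (r s P P' : K) (h : r * P * s = P) (h' : r * P' * s = P') :
    Commute r (P * P'⁻¹) := by
  have hs : s = P'⁻¹ * r⁻¹ * P' := by
    calc s = P'⁻¹ * r⁻¹ * (r * P' * s) := by group
      _ = P'⁻¹ * r⁻¹ * P' := by rw [h']
  rw [hs] at h
  show r * (P * P'⁻¹) = (P * P'⁻¹) * r
  calc r * (P * P'⁻¹) = (r * P * (P'⁻¹ * r⁻¹ * P')) * (P'⁻¹ * r) := by group
    _ = P * (P'⁻¹ * r) := by rw [h]
    _ = (P * P'⁻¹) * r := by group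

lemma my_step2' (r s P P' : K) (h' : r * P' * s = P') (hc : Commute r (P * P'⁻¹)) :
    r * P * s = P := by
  have hc' : r * (P * P'⁻¹) = (P * P'⁻¹) * r := hc.eq
  calc r * P * s = (r * (P * P'⁻¹)) * (r⁻¹ * (r * P' * s)) := by group
    _ = (r * (P * P'⁻¹)) * (r⁻¹ * P') := by rw [h']
    _ = ((P * P'⁻¹) * r) * (r⁻¹ * P') := by rw [hc']
    _ = P := by group

lemma my_step4 (A A' Ab Ab' B B' Bb Bb' P Q : K)
    (ha : A * P * Ab = A' * Q * Ab')
    (hrs : (B⁻¹ * B' * A'⁻¹ * A) * P * (Ab * Ab'⁻¹ * Bb' * Bb⁻¹) = P) :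
    B * P * Bb = B' * Q * Bb' := by
  have hQ : Q = A'⁻¹ * (A * P * Ab) * Ab'⁻¹ := by rw [ha]; group
  calc B * P * Bb
      = B * ((B⁻¹ * B' * A'⁻¹ * A) * P * (Ab * Ab'⁻¹ * Bb' * Bb⁻¹)) * Bb := by rw [hrs]
    _ = B' * (A'⁻¹ * (A * P * Ab) * Ab'⁻¹) * Bb' := by group
    _ = B' * Q * Bb' := by rw [← hQ]

end GroupSteps

lemma my_step3 {β : Type u} (r δ u v t : FreeGroup β)
    (hu : Commute r (u * δ * u⁻¹)) (hv : Commute r (v * δ * v⁻¹))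
    (ht : Commute r (t * δ * t⁻¹)) :
    Commute r ((t * u⁻¹ * v) * δ * (v⁻¹ * u * t⁻¹)) := by
  by_cases hr : r = 1
  · subst hr; exact Commute.one_left _
  by_cases hδ : δ = 1
  · subst hδ
    have : (t * u⁻¹ * v) * 1 * (v⁻¹ * u * t⁻¹) = 1 := by group
    rw [this]
    exact Commute.one_right _
  have hxy : Commute (u * δ * u⁻¹) (v * δ * v⁻¹) := freeGroup_ct r _ _ hr hu hv
  have h2 : Commute δ (u⁻¹ * (v * δ * v⁻¹) * u) := by
    have hxy' := hxy.eq
    show δ * (u⁻¹ * (v * δ * v⁻¹) * u) = (u⁻¹ * (v * δ * v⁻¹) * u) * δ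
    calc δ * (u⁻¹ * (v * δ * v⁻¹) * u)
        = u⁻¹ * ((u * δ * u⁻¹) * (v * δ * v⁻¹)) * u := by group
      _ = u⁻¹ * ((v * δ * v⁻¹) * (u * δ * u⁻¹)) * u := by rw [hxy']
      _ = (u⁻¹ * (v * δ * v⁻¹) * u) * δ := by group
  have h3 : Commute (t * δ * t⁻¹) (t * (u⁻¹ * (v * δ * v⁻¹) * u) * t⁻¹) := by
    have h2' := h2.eq
    show _ = _
    calc (t * δ * t⁻¹) * (t * (u⁻¹ * (v * δ * v⁻¹) * u) * t⁻¹)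
        = t * (δ * (u⁻¹ * (v * δ * v⁻¹) * u)) * t⁻¹ := by group
      _ = t * ((u⁻¹ * (v * δ * v⁻¹) * u) * δ) * t⁻¹ := by rw [h2']
      _ = (t * (u⁻¹ * (v * δ * v⁻¹) * u) * t⁻¹) * (t * δ * t⁻¹) := by group
  have htne : t * δ * t⁻¹ ≠ 1 := by
    intro h
    apply hδ
    have : δ = t⁻¹ * (t * δ * t⁻¹) * t := by group
    rw [h] at this
    rw [this]; group
  have final : Commute r (t * (u⁻¹ * (v * δ * v⁻¹) * u) * t⁻¹) :=
    (freeGroup_ct (t * δ * t⁻¹) r _ htne ht.symm h3)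
  have heq : t * (u⁻¹ * (v * δ * v⁻¹) * u) * t⁻¹ = (t * u⁻¹ * v) * δ * (v⁻¹ * u * t⁻¹) := by
    group
  rwa [heq] at final

lemma xLetter_inj {b b' : Bool} {i : Fin 4} (h : xLetter b i = xLetter b' i) : b = b' := by
  cases b <;> cases b' <;> simp_all [xLetter]

lemma word4_inj : Function.Injective word4 := by
  intro c c' h
  simp only [word4, List.cons.injEq, and_true] at h
  funext i
  fin_cases i
  · exact xLetter_inj h.2.2.2.1
  · exact xLetter_inj h.2.2.1
  · exact xLetter_inj h.2.1
  · exact xLetter_inj h.1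

/-- Choice function from four booleans; `ch m0 m1 m2 m3 i = mᵢ`. -/
def ch (m0 m1 m2 m3 : Bool) : Fin 4 → Bool
  | 0 => m0
  | 1 => m1
  | 2 => m2
  | 3 => m3

/-- `T₄` is a test set for `L₄`: any two string homomorphisms (monoid homomorphisms between
free monoids) that agree on every word of `T₄` agree on every word of `L₄`. -/
theorem T4_is_test_set_for_L4 :
    ∀ (Γ : Type) (f g : FreeMonoid Sigma4 →* FreeMonoid Γ),
      (∀ w ∈ T4, f (FreeMonoid.ofList w) = g (FreeMonoid.ofList w)) →
      ∀ w ∈ L4, f (FreeMonoid.ofList w) = g (FreeMonoid.ofList w) := by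
  intro Γ f g hT w hw
  classical
  obtain ⟨c, rfl⟩ := hw
  by_cases hc : c = fun _ => false
  · subst hc
    have expand : ∀ (h : FreeMonoid Sigma4 →* FreeMonoid Γ) (c : Fin 4 → Bool),
        iotaFG Γ (h (FreeMonoid.ofList (word4 c))) =
          iotaFG Γ (h (FreeMonoid.of (xLetter (c 3) 3))) *
          (iotaFG Γ (h (FreeMonoid.of (xLetter (c 2) 2))) *
          (iotaFG Γ (h (FreeMonoid.of (xLetter (c 1) 1))) *
          (iotaFG Γ (h (FreeMonoid.of (xLetter (c 0) 0))) *
          (iotaFG Γ (h (FreeMonoid.of (xbarLetter (c 0) 0))) *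
          (iotaFG Γ (h (FreeMonoid.of (xbarLetter (c 1) 1))) *
          (iotaFG Γ (h (FreeMonoid.of (xbarLetter (c 2) 2))) *
          iotaFG Γ (h (FreeMonoid.of (xbarLetter (c 3) 3))))))))) := by
      intro h c
      simp only [word4, FreeMonoid.ofList_cons, FreeMonoid.ofList_singleton, FreeMonoid.ofList_nil,
        map_mul, map_one, mul_one, mul_assoc]
    have hyp : ∀ m0 m1 m2 m3 : Bool, ¬(m0 = false ∧ m1 = false ∧ m2 = false ∧ m3 = false) →
        iotaFG Γ (f (FreeMonoid.of (xLetter m3 3))) *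
        (iotaFG Γ (f (FreeMonoid.of (xLetter m2 2))) *
         iotaFG Γ (f (FreeMonoid.of (xLetter m1 1))) *
         iotaFG Γ (f (FreeMonoid.of (xLetter m0 0))) *
         iotaFG Γ (f (FreeMonoid.of (xbarLetter m0 0))) *
         iotaFG Γ (f (FreeMonoid.of (xbarLetter m1 1))) *
         iotaFG Γ (f (FreeMonoid.of (xbarLetter m2 2)))) *
        iotaFG Γ (f (FreeMonoid.of (xbarLetter m3 3))) =
        iotaFG Γ (g (FreeMonoid.of (xLetter m3 3))) *
        (iotaFG Γ (g (FreeMonoid.of (xLetter m2 2))) *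
         iotaFG Γ (g (FreeMonoid.of (xLetter m1 1))) *
         iotaFG Γ (g (FreeMonoid.of (xLetter m0 0))) *
         iotaFG Γ (g (FreeMonoid.of (xbarLetter m0 0))) *
         iotaFG Γ (g (FreeMonoid.of (xbarLetter m1 1))) *
         iotaFG Γ (g (FreeMonoid.of (xbarLetter m2 2)))) *
        iotaFG Γ (g (FreeMonoid.of (xbarLetter m3 3))) := by
      intro m0 m1 m2 m3 hm
      have hcne : ch m0 m1 m2 m3 ≠ (fun _ => false) := by
        intro hh
        exact hm ⟨congrFun hh 0, congrFun hh 1, congrFun hh 2, congrFun hh 3⟩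
      have hmem : word4 (ch m0 m1 m2 m3) ∈ T4 :=
        ⟨⟨_, rfl⟩, fun hh => hcne (word4_inj hh)⟩
      have h8 := congrArg (iotaFG Γ) (hT _ hmem)
      rw [expand f _, expand g _] at h8
      simp only [mul_assoc] at h8 ⊢; exact h8
    have ea_ttt : iotaFG Γ (f (FreeMonoid.of (Sigma4.a 3))) * (iotaFG Γ (f (FreeMonoid.of (Sigma4.a 2))) * iotaFG Γ (f (FreeMonoid.of (Sigma4.a 1))) * iotaFG Γ (f (FreeMonoid.of (Sigma4.a 0))) * iotaFG Γ (f (FreeMonoid.of (Sigma4.abar 0))) * iotaFG Γ (f (FreeMonoid.of (Sigma4.abar 1))) * iotaFG Γ (f (FreeMonoid.of (Sigma4.abar 2)))) * iotaFG Γ (f (FreeMonoid.of (Sigma4.abar 3))) = iotaFG Γ (g (FreeMonoid.of (Sigma4.a 3))) * (iotaFG Γ (g (FreeMonoid.of (Sigma4.a 2))) * iotaFG Γ (g (FreeMonoid.of (Sigma4.a 1))) * iotaFG Γ (g (FreeMonoid.of (Sigma4.a 0))) * iotaFG Γ (g (FreeMonoid.of (Sigma4.abar 0))) * iotaFG Γ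 (g (FreeMonoid.of (Sigma4.abar 1))) * iotaFG Γ (g (FreeMonoid.of (Sigma4.abar 2)))) * iotaFG Γ (g (FreeMonoid.of (Sigma4.abar 3))) := by
      simpa [xLetter, xbarLetter] using hyp true true true true (by decide)
    have ea_ttf : iotaFG Γ (f (FreeMonoid.of (Sigma4.a 3))) * (iotaFG Γ (f (FreeMonoid.of (Sigma4.a 2))) * iotaFG Γ (f (FreeMonoid.of (Sigma4.a 1))) * iotaFG Γ (f (FreeMonoid.of (Sigma4.b 0))) * iotaFG Γ (f (FreeMonoid.of (Sigma4.bbar 0))) * iotaFG Γ (f (FreeMonoid.of (Sigma4.abar 1))) * iotaFG Γ (f (FreeMonoid.of (Sigma4.abar 2)))) * iotaFG Γ (f (FreeMonoid.of (Sigma4.abar 3))) = iotaFG Γ (g (FreeMonoid.of (Sigma4.a 3))) * (iotaFG Γ (g (FreeMonoid.of (Sigma4.a 2))) * iotaFG Γ (g (FreeMonoid.of (Sigma4.a 1))) * iotaFG Γ (g (FreeMonoid.of (Sigma4.b 0))) * iotaFG Γ (g (FreeMonoid.of (Sigma4.bbar 0))) * iotaFG Γ (g (FreeMonoid.of (Sigma4.abar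 1))) * iotaFG Γ (g (FreeMonoid.of (Sigma4.abar 2)))) * iotaFG Γ (g (FreeMonoid.of (Sigma4.abar 3))) := by
      simpa [xLetter, xbarLetter] using hyp false true true true (by decide)
    have ea_tft : iotaFG Γ (f (FreeMonoid.of (Sigma4.a 3))) * (iotaFG Γ (f (FreeMonoid.of (Sigma4.a 2))) * iotaFG Γ (f (FreeMonoid.of (Sigma4.b 1))) * iotaFG Γ (f (FreeMonoid.of (Sigma4.a 0))) * iotaFG Γ (f (FreeMonoid.of (Sigma4.abar 0))) * iotaFG Γ (f (FreeMonoid.of (Sigma4.bbar 1))) * iotaFG Γ (f (FreeMonoid.of (Sigma4.abar 2)))) * iotaFG Γ (f (FreeMonoid.of (Sigma4.abar 3))) = iotaFG Γ (g (FreeMonoid.of (Sigma4.a 3))) * (iotaFG Γ (g (FreeMonoid.of (Sigma4.a 2))) * iotaFG Γ (g (FreeMonoid.of (Sigma4.b 1))) * iotaFG Γ (g (FreeMonoid.of (Sigma4.a 0))) * iotaFG Γ (g (FreeMonoid.of (Sigma4.abar 0))) * iotaFG Γ (g (FreeMonoid.of (Sigma4.bbar 1))) * iotaFG Γ (g (FreeMonoid.of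 (Sigma4.abar 2)))) * iotaFG Γ (g (FreeMonoid.of (Sigma4.abar 3))) := by
      simpa [xLetter, xbarLetter] using hyp true false true true (by decide)
    have ea_tff : iotaFG Γ (f (FreeMonoid.of (Sigma4.a 3))) * (iotaFG Γ (f (FreeMonoid.of (Sigma4.a 2))) * iotaFG Γ (f (FreeMonoid.of (Sigma4.b 1))) * iotaFG Γ (f (FreeMonoid.of (Sigma4.b 0))) * iotaFG Γ (f (FreeMonoid.of (Sigma4.bbar 0))) * iotaFG Γ (f (FreeMonoid.of (Sigma4.bbar 1))) * iotaFG Γ (f (FreeMonoid.of (Sigma4.abar 2)))) * iotaFG Γ (f (FreeMonoid.of (Sigma4.abar 3))) = iotaFG Γ (g (FreeMonoid.of (Sigma4.a 3))) * (iotaFG Γ (g (FreeMonoid.of (Sigma4.a 2))) * iotaFG Γ (g (FreeMonoid.of (Sigma4.b 1))) * iotaFG Γ (g (FreeMonoid.of (Sigma4.b 0))) * iotaFG Γ (g (FreeMonoid.of (Sigma4.bbar 0))) * iotaFG Γ (g (FreeMonoid.of (Sigma4.bbar 1))) * iotaFG Γ (g (FreeMonoid.of (Sigma4.abar 2)))) *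 iotaFG Γ (g (FreeMonoid.of (Sigma4.abar 3))) := by
      simpa [xLetter, xbarLetter] using hyp false false true true (by decide)
    have ea_ftt : iotaFG Γ (f (FreeMonoid.of (Sigma4.a 3))) * (iotaFG Γ (f (FreeMonoid.of (Sigma4.b 2))) * iotaFG Γ (f (FreeMonoid.of (Sigma4.a 1))) * iotaFG Γ (f (FreeMonoid.of (Sigma4.a 0))) * iotaFG Γ (f (FreeMonoid.of (Sigma4.abar 0))) * iotaFG Γ (f (FreeMonoid.of (Sigma4.abar 1))) * iotaFG Γ (f (FreeMonoid.of (Sigma4.bbar 2)))) * iotaFG Γ (f (FreeMonoid.of (Sigma4.abar 3))) = iotaFG Γ (g (FreeMonoid.of (Sigma4.a 3))) * (iotaFG Γ (g (FreeMonoid.of (Sigma4.b 2))) * iotaFG Γ (g (FreeMonoid.of (Sigma4.a 1))) * iotaFG Γ (g (FreeMonoid.of (Sigma4.a 0))) * iotaFG Γ (g (FreeMonoid.of (Sigma4.abar 0))) * iotaFG Γ (g (FreeMonoid.of (Sigma4.abar 1))) * iotaFG Γ (g (FreeMonoid.of (Sigma4.bbar 2)))) * iotaFG Γ (g (FreeMonoid.of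 (Sigma4.abar 3))) := by
      simpa [xLetter, xbarLetter] using hyp true true false true (by decide)
    have ea_ftf : iotaFG Γ (f (FreeMonoid.of (Sigma4.a 3))) * (iotaFG Γ (f (FreeMonoid.of (Sigma4.b 2))) * iotaFG Γ (f (FreeMonoid.of (Sigma4.a 1))) * iotaFG Γ (f (FreeMonoid.of (Sigma4.b 0))) * iotaFG Γ (f (FreeMonoid.of (Sigma4.bbar 0))) * iotaFG Γ (f (FreeMonoid.of (Sigma4.abar 1))) * iotaFG Γ (f (FreeMonoid.of (Sigma4.bbar 2)))) * iotaFG Γ (f (FreeMonoid.of (Sigma4.abar 3))) = iotaFG Γ (g (FreeMonoid.of (Sigma4.a 3))) * (iotaFG Γ (g (FreeMonoid.of (Sigma4.b 2))) * iotaFG Γ (g (FreeMonoid.of (Sigma4.a 1))) * iotaFG Γ (g (FreeMonoid.of (Sigma4.b 0))) * iotaFG Γ (g (FreeMonoid.of (Sigma4.bbar 0))) * iotaFG Γ (g (FreeMonoid.of (Sigma4.abar 1))) * iotaFG Γ (g (FreeMonoid.of (Sigma4.bbar 2)))) * iotaFG Γ (g (FreeMonoid.of (Sigma4.abar 3)))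 := by
      simpa [xLetter, xbarLetter] using hyp false true false true (by decide)
    have ea_fft : iotaFG Γ (f (FreeMonoid.of (Sigma4.a 3))) * (iotaFG Γ (f (FreeMonoid.of (Sigma4.b 2))) * iotaFG Γ (f (FreeMonoid.of (Sigma4.b 1))) * iotaFG Γ (f (FreeMonoid.of (Sigma4.a 0))) * iotaFG Γ (f (FreeMonoid.of (Sigma4.abar 0))) * iotaFG Γ (f (FreeMonoid.of (Sigma4.bbar 1))) * iotaFG Γ (f (FreeMonoid.of (Sigma4.bbar 2)))) * iotaFG Γ (f (FreeMonoid.of (Sigma4.abar 3))) = iotaFG Γ (g (FreeMonoid.of (Sigma4.a 3))) * (iotaFG Γ (g (FreeMonoid.of (Sigma4.b 2))) * iotaFG Γ (g (FreeMonoid.of (Sigma4.b 1))) * iotaFG Γ (g (FreeMonoid.of (Sigma4.a 0))) * iotaFG Γ (g (FreeMonoid.of (Sigma4.abar 0))) * iotaFG Γ (g (FreeMonoid.of (Sigma4.bbar 1))) * iotaFG Γ (g (FreeMonoid.of (Sigma4.bbar 2)))) * iotaFG Γ (g (FreeMonoid.of (Sigma4.abar 3))) := by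
      simpa [xLetter, xbarLetter] using hyp true false false true (by decide)
    have ea_fff : iotaFG Γ (f (FreeMonoid.of (Sigma4.a 3))) * (iotaFG Γ (f (FreeMonoid.of (Sigma4.b 2))) * iotaFG Γ (f (FreeMonoid.of (Sigma4.b 1))) * iotaFG Γ (f (FreeMonoid.of (Sigma4.b 0))) * iotaFG Γ (f (FreeMonoid.of (Sigma4.bbar 0))) * iotaFG Γ (f (FreeMonoid.of (Sigma4.bbar 1))) * iotaFG Γ (f (FreeMonoid.of (Sigma4.bbar 2)))) * iotaFG Γ (f (FreeMonoid.of (Sigma4.abar 3))) = iotaFG Γ (g (FreeMonoid.of (Sigma4.a 3))) * (iotaFG Γ (g (FreeMonoid.of (Sigma4.b 2))) * iotaFG Γ (g (FreeMonoid.of (Sigma4.b 1))) * iotaFG Γ (g (FreeMonoid.of (Sigma4.b 0))) * iotaFG Γ (g (FreeMonoid.of (Sigma4.bbar 0))) * iotaFG Γ (g (FreeMonoid.of (Sigma4.bbar 1))) * iotaFG Γ (g (FreeMonoid.of (Sigma4.bbar 2)))) * iotaFG Γ (g (FreeMonoid.of (Sigma4.abar 3))) := by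
      simpa [xLetter, xbarLetter] using hyp false false false true (by decide)
    have eb_ttt : iotaFG Γ (f (FreeMonoid.of (Sigma4.b 3))) * (iotaFG Γ (f (FreeMonoid.of (Sigma4.a 2))) * iotaFG Γ (f (FreeMonoid.of (Sigma4.a 1))) * iotaFG Γ (f (FreeMonoid.of (Sigma4.a 0))) * iotaFG Γ (f (FreeMonoid.of (Sigma4.abar 0))) * iotaFG Γ (f (FreeMonoid.of (Sigma4.abar 1))) * iotaFG Γ (f (FreeMonoid.of (Sigma4.abar 2)))) * iotaFG Γ (f (FreeMonoid.of (Sigma4.bbar 3))) = iotaFG Γ (g (FreeMonoid.of (Sigma4.b 3))) * (iotaFG Γ (g (FreeMonoid.of (Sigma4.a 2))) * iotaFG Γ (g (FreeMonoid.of (Sigma4.a 1))) * iotaFG Γ (g (FreeMonoid.of (Sigma4.a 0))) * iotaFG Γ (g (FreeMonoid.of (Sigma4.abar 0))) * iotaFG Γ (g (FreeMonoid.of (Sigma4.abar 1))) * iotaFG Γ (g (FreeMonoid.of (Sigma4.abar 2)))) * iotaFG Γ (g (FreeMonoid.of (Sigma4.bbar 3))) := by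
      simpa [xLetter, xbarLetter] using hyp true true true false (by decide)
    have eb_ttf : iotaFG Γ (f (FreeMonoid.of (Sigma4.b 3))) * (iotaFG Γ (f (FreeMonoid.of (Sigma4.a 2))) * iotaFG Γ (f (FreeMonoid.of (Sigma4.a 1))) * iotaFG Γ (f (FreeMonoid.of (Sigma4.b 0))) * iotaFG Γ (f (FreeMonoid.of (Sigma4.bbar 0))) * iotaFG Γ (f (FreeMonoid.of (Sigma4.abar 1))) * iotaFG Γ (f (FreeMonoid.of (Sigma4.abar 2)))) * iotaFG Γ (f (FreeMonoid.of (Sigma4.bbar 3))) = iotaFG Γ (g (FreeMonoid.of (Sigma4.b 3))) * (iotaFG Γ (g (FreeMonoid.of (Sigma4.a 2))) * iotaFG Γ (g (FreeMonoid.of (Sigma4.a 1))) * iotaFG Γ (g (FreeMonoid.of (Sigma4.b 0))) * iotaFG Γ (g (FreeMonoid.of (Sigma4.bbar 0))) * iotaFG Γ (g (FreeMonoid.of (Sigma4.abar 1))) * iotaFG Γ (g (FreeMonoid.of (Sigma4.abar 2)))) * iotaFG Γ (g (FreeMonoid.of (Sigma4.bbar 3))) := by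
      simpa [xLetter, xbarLetter] using hyp false true true false (by decide)
    have eb_tft : iotaFG Γ (f (FreeMonoid.of (Sigma4.b 3))) * (iotaFG Γ (f (FreeMonoid.of (Sigma4.a 2))) * iotaFG Γ (f (FreeMonoid.of (Sigma4.b 1))) * iotaFG Γ (f (FreeMonoid.of (Sigma4.a 0))) * iotaFG Γ (f (FreeMonoid.of (Sigma4.abar 0))) * iotaFG Γ (f (FreeMonoid.of (Sigma4.bbar 1))) * iotaFG Γ (f (FreeMonoid.of (Sigma4.abar 2)))) * iotaFG Γ (f (FreeMonoid.of (Sigma4.bbar 3))) = iotaFG Γ (g (FreeMonoid.of (Sigma4.b 3))) * (iotaFG Γ (g (FreeMonoid.of (Sigma4.a 2))) * iotaFG Γ (g (FreeMonoid.of (Sigma4.b 1))) * iotaFG Γ (g (FreeMonoid.of (Sigma4.a 0))) * iotaFG Γ (g (FreeMonoid.of (Sigma4.abar 0))) * iotaFG Γ (g (FreeMonoid.of (Sigma4.bbar 1))) * iotaFG Γ (g (FreeMonoid.of (Sigma4.abar 2)))) * iotaFG Γ (g (FreeMonoid.of (Sigma4.bbar 3))) := by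
      simpa [xLetter, xbarLetter] using hyp true false true false (by decide)
    have eb_tff : iotaFG Γ (f (FreeMonoid.of (Sigma4.b 3))) * (iotaFG Γ (f (FreeMonoid.of (Sigma4.a 2))) * iotaFG Γ (f (FreeMonoid.of (Sigma4.b 1))) * iotaFG Γ (f (FreeMonoid.of (Sigma4.b 0))) * iotaFG Γ (f (FreeMonoid.of (Sigma4.bbar 0))) * iotaFG Γ (f (FreeMonoid.of (Sigma4.bbar 1))) * iotaFG Γ (f (FreeMonoid.of (Sigma4.abar 2)))) * iotaFG Γ (f (FreeMonoid.of (Sigma4.bbar 3))) = iotaFG Γ (g (FreeMonoid.of (Sigma4.b 3))) * (iotaFG Γ (g (FreeMonoid.of (Sigma4.a 2))) * iotaFG Γ (g (FreeMonoid.of (Sigma4.b 1))) * iotaFG Γ (g (FreeMonoid.of (Sigma4.b 0))) * iotaFG Γ (g (FreeMonoid.of (Sigma4.bbar 0))) * iotaFG Γ (g (FreeMonoid.of (Sigma4.bbar 1))) * iotaFG Γ (g (FreeMonoid.of (Sigma4.abar 2)))) * iotaFG Γ (g (FreeMonoid.of (Sigma4.bbar 3))) := by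
      simpa [xLetter, xbarLetter] using hyp false false true false (by decide)
    have eb_ftt : iotaFG Γ (f (FreeMonoid.of (Sigma4.b 3))) * (iotaFG Γ (f (FreeMonoid.of (Sigma4.b 2))) * iotaFG Γ (f (FreeMonoid.of (Sigma4.a 1))) * iotaFG Γ (f (FreeMonoid.of (Sigma4.a 0))) * iotaFG Γ (f (FreeMonoid.of (Sigma4.abar 0))) * iotaFG Γ (f (FreeMonoid.of (Sigma4.abar 1))) * iotaFG Γ (f (FreeMonoid.of (Sigma4.bbar 2)))) * iotaFG Γ (f (FreeMonoid.of (Sigma4.bbar 3))) = iotaFG Γ (g (FreeMonoid.of (Sigma4.b 3))) * (iotaFG Γ (g (FreeMonoid.of (Sigma4.b 2))) * iotaFG Γ (g (FreeMonoid.of (Sigma4.a 1))) * iotaFG Γ (g (FreeMonoid.of (Sigma4.a 0))) * iotaFG Γ (g (FreeMonoid.of (Sigma4.abar 0))) * iotaFG Γ (g (FreeMonoid.of (Sigma4.abar 1))) * iotaFG Γ (g (FreeMonoid.of (Sigma4.bbar 2)))) * iotaFG Γ (g (FreeMonoid.of (Sigma4.bbar 3))) := by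
      simpa [xLetter, xbarLetter] using hyp true true false false (by decide)
    have eb_ftf : iotaFG Γ (f (FreeMonoid.of (Sigma4.b 3))) * (iotaFG Γ (f (FreeMonoid.of (Sigma4.b 2))) * iotaFG Γ (f (FreeMonoid.of (Sigma4.a 1))) * iotaFG Γ (f (FreeMonoid.of (Sigma4.b 0))) * iotaFG Γ (f (FreeMonoid.of (Sigma4.bbar 0))) * iotaFG Γ (f (FreeMonoid.of (Sigma4.abar 1))) * iotaFG Γ (f (FreeMonoid.of (Sigma4.bbar 2)))) * iotaFG Γ (f (FreeMonoid.of (Sigma4.bbar 3))) = iotaFG Γ (g (FreeMonoid.of (Sigma4.b 3))) * (iotaFG Γ (g (FreeMonoid.of (Sigma4.b 2))) * iotaFG Γ (g (FreeMonoid.of (Sigma4.a 1))) * iotaFG Γ (g (FreeMonoid.of (Sigma4.b 0))) * iotaFG Γ (g (FreeMonoid.of (Sigma4.bbar 0))) * iotaFG Γ (g (FreeMonoid.of (Sigma4.abar 1))) * iotaFG Γ (g (FreeMonoid.of (Sigma4.bbar 2)))) * iotaFG Γ (g (FreeMonoid.of (Sigma4.bbar 3))) := by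
      simpa [xLetter, xbarLetter] using hyp false true false false (by decide)
    have eb_fft : iotaFG Γ (f (FreeMonoid.of (Sigma4.b 3))) * (iotaFG Γ (f (FreeMonoid.of (Sigma4.b 2))) * iotaFG Γ (f (FreeMonoid.of (Sigma4.b 1))) * iotaFG Γ (f (FreeMonoid.of (Sigma4.a 0))) * iotaFG Γ (f (FreeMonoid.of (Sigma4.abar 0))) * iotaFG Γ (f (FreeMonoid.of (Sigma4.bbar 1))) * iotaFG Γ (f (FreeMonoid.of (Sigma4.bbar 2)))) * iotaFG Γ (f (FreeMonoid.of (Sigma4.bbar 3))) = iotaFG Γ (g (FreeMonoid.of (Sigma4.b 3))) * (iotaFG Γ (g (FreeMonoid.of (Sigma4.b 2))) * iotaFG Γ (g (FreeMonoid.of (Sigma4.b 1))) * iotaFG Γ (g (FreeMonoid.of (Sigma4.a 0))) * iotaFG Γ (g (FreeMonoid.of (Sigma4.abar 0))) * iotaFG Γ (g (FreeMonoid.of (Sigma4.bbar 1))) * iotaFG Γ (g (FreeMonoid.of (Sigma4.bbar 2)))) * iotaFG Γ (g (FreeMonoid.of (Sigma4.bbar 3))) := by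
      simpa [xLetter, xbarLetter] using hyp true false false false (by decide)
    have k_ttt := my_step1 (ha := ea_ttt) (hb := eb_ttt)
    have k_ttf := my_step1 (ha := ea_ttf) (hb := eb_ttf)
    have k_tft := my_step1 (ha := ea_tft) (hb := eb_tft)
    have k_tff := my_step1 (ha := ea_tff) (hb := eb_tff)
    have k_ftt := my_step1 (ha := ea_ftt) (hb := eb_ftt)
    have k_ftf := my_step1 (ha := ea_ftf) (hb := eb_ftf)
    have k_fft := my_step1 (ha := ea_fft) (hb := eb_fft)
    have cu := my_step2 (h := k_ttf) (h' := k_ttt)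
    have cv := my_step2 (h := k_tff) (h' := k_tft)
    have cw := my_step2 (h := k_ftf) (h' := k_ftt)
    have cu' : Commute (((iotaFG Γ (f (FreeMonoid.of (Sigma4.b 3))))⁻¹ * (iotaFG Γ (g (FreeMonoid.of (Sigma4.b 3)))) * (iotaFG Γ (g (FreeMonoid.of (Sigma4.a 3))))⁻¹ * (iotaFG Γ (f (FreeMonoid.of (Sigma4.a 3)))))) ((iotaFG Γ (f (FreeMonoid.of (Sigma4.a 2))) * iotaFG Γ (f (FreeMonoid.of (Sigma4.a 1)))) * (iotaFG Γ (f (FreeMonoid.of (Sigma4.b 0))) * iotaFG Γ (f (FreeMonoid.of (Sigma4.bbar 0))) * (iotaFG Γ (f (FreeMonoid.of (Sigma4.a 0))) * iotaFG Γ (f (FreeMonoid.of (Sigma4.abar 0))))⁻¹) * (iotaFG Γ (f (FreeMonoid.of (Sigma4.a 2))) * iotaFG Γ (f (FreeMonoid.of (Sigma4.a 1))))⁻¹) := by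
      have hq : (iotaFG Γ (f (FreeMonoid.of (Sigma4.a 2))) * iotaFG Γ (f (FreeMonoid.of (Sigma4.a 1))) * iotaFG Γ (f (FreeMonoid.of (Sigma4.b 0))) * iotaFG Γ (f (FreeMonoid.of (Sigma4.bbar 0))) * iotaFG Γ (f (FreeMonoid.of (Sigma4.abar 1))) * iotaFG Γ (f (FreeMonoid.of (Sigma4.abar 2)))) * (iotaFG Γ (f (FreeMonoid.of (Sigma4.a 2))) * iotaFG Γ (f (FreeMonoid.of (Sigma4.a 1))) * iotaFG Γ (f (FreeMonoid.of (Sigma4.a 0))) * iotaFG Γ (f (FreeMonoid.of (Sigma4.abar 0))) * iotaFG Γ (f (FreeMonoid.of (Sigma4.abar 1))) * iotaFG Γ (f (FreeMonoid.of (Sigma4.abar 2))))⁻¹ = (iotaFG Γ (f (FreeMonoid.of (Sigma4.a 2))) * iotaFG Γ (f (FreeMonoid.of (Sigma4.a 1)))) * (iotaFG Γ (f (FreeMonoid.of (Sigma4.b 0))) * iotaFG Γ (f (FreeMonoid.of (Sigma4.bbar 0))) * (iotaFG Γ (f (FreeMonoid.of (Sigma4.a 0))) * iotaFG Γ (f (FreeMonoid.of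 (Sigma4.abar 0))))⁻¹) * (iotaFG Γ (f (FreeMonoid.of (Sigma4.a 2))) * iotaFG Γ (f (FreeMonoid.of (Sigma4.a 1))))⁻¹ := by group
      rwa [hq] at cu
    have cv' : Commute (((iotaFG Γ (f (FreeMonoid.of (Sigma4.b 3))))⁻¹ * (iotaFG Γ (g (FreeMonoid.of (Sigma4.b 3)))) * (iotaFG Γ (g (FreeMonoid.of (Sigma4.a 3))))⁻¹ * (iotaFG Γ (f (FreeMonoid.of (Sigma4.a 3)))))) ((iotaFG Γ (f (FreeMonoid.of (Sigma4.a 2))) * iotaFG Γ (f (FreeMonoid.of (Sigma4.b 1)))) * (iotaFG Γ (f (FreeMonoid.of (Sigma4.b 0))) * iotaFG Γ (f (FreeMonoid.of (Sigma4.bbar 0))) * (iotaFG Γ (f (FreeMonoid.of (Sigma4.a 0))) * iotaFG Γ (f (FreeMonoid.of (Sigma4.abar 0))))⁻¹) * (iotaFG Γ (f (FreeMonoid.of (Sigma4.a 2))) * iotaFG Γ (f (FreeMonoid.of (Sigma4.b 1))))⁻¹) := by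
      have hq : (iotaFG Γ (f (FreeMonoid.of (Sigma4.a 2))) * iotaFG Γ (f (FreeMonoid.of (Sigma4.b 1))) * iotaFG Γ (f (FreeMonoid.of (Sigma4.b 0))) * iotaFG Γ (f (FreeMonoid.of (Sigma4.bbar 0))) * iotaFG Γ (f (FreeMonoid.of (Sigma4.bbar 1))) * iotaFG Γ (f (FreeMonoid.of (Sigma4.abar 2)))) * (iotaFG Γ (f (FreeMonoid.of (Sigma4.a 2))) * iotaFG Γ (f (FreeMonoid.of (Sigma4.b 1))) * iotaFG Γ (f (FreeMonoid.of (Sigma4.a 0))) * iotaFG Γ (f (FreeMonoid.of (Sigma4.abar 0))) * iotaFG Γ (f (FreeMonoid.of (Sigma4.bbar 1))) * iotaFG Γ (f (FreeMonoid.of (Sigma4.abar 2))))⁻¹ = (iotaFG Γ (f (FreeMonoid.of (Sigma4.a 2))) * iotaFG Γ (f (FreeMonoid.of (Sigma4.b 1)))) * (iotaFG Γ (f (FreeMonoid.of (Sigma4.b 0))) * iotaFG Γ (f (FreeMonoid.of (Sigma4.bbar 0))) * (iotaFG Γ (f (FreeMonoid.of (Sigma4.a 0))) * iotaFG Γ (f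 (FreeMonoid.of (Sigma4.abar 0))))⁻¹) * (iotaFG Γ (f (FreeMonoid.of (Sigma4.a 2))) * iotaFG Γ (f (FreeMonoid.of (Sigma4.b 1))))⁻¹ := by group
      rwa [hq] at cv
    have cw' : Commute (((iotaFG Γ (f (FreeMonoid.of (Sigma4.b 3))))⁻¹ * (iotaFG Γ (g (FreeMonoid.of (Sigma4.b 3)))) * (iotaFG Γ (g (FreeMonoid.of (Sigma4.a 3))))⁻¹ * (iotaFG Γ (f (FreeMonoid.of (Sigma4.a 3)))))) ((iotaFG Γ (f (FreeMonoid.of (Sigma4.b 2))) * iotaFG Γ (f (FreeMonoid.of (Sigma4.a 1)))) * (iotaFG Γ (f (FreeMonoid.of (Sigma4.b 0))) * iotaFG Γ (f (FreeMonoid.of (Sigma4.bbar 0))) * (iotaFG Γ (f (FreeMonoid.of (Sigma4.a 0))) * iotaFG Γ (f (FreeMonoid.of (Sigma4.abar 0))))⁻¹) * (iotaFG Γ (f (FreeMonoid.of (Sigma4.b 2))) * iotaFG Γ (f (FreeMonoid.of (Sigma4.a 1))))⁻¹) := by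
      have hq : (iotaFG Γ (f (FreeMonoid.of (Sigma4.b 2))) * iotaFG Γ (f (FreeMonoid.of (Sigma4.a 1))) * iotaFG Γ (f (FreeMonoid.of (Sigma4.b 0))) * iotaFG Γ (f (FreeMonoid.of (Sigma4.bbar 0))) * iotaFG Γ (f (FreeMonoid.of (Sigma4.abar 1))) * iotaFG Γ (f (FreeMonoid.of (Sigma4.bbar 2)))) * (iotaFG Γ (f (FreeMonoid.of (Sigma4.b 2))) * iotaFG Γ (f (FreeMonoid.of (Sigma4.a 1))) * iotaFG Γ (f (FreeMonoid.of (Sigma4.a 0))) * iotaFG Γ (f (FreeMonoid.of (Sigma4.abar 0))) * iotaFG Γ (f (FreeMonoid.of (Sigma4.abar 1))) * iotaFG Γ (f (FreeMonoid.of (Sigma4.bbar 2))))⁻¹ = (iotaFG Γ (f (FreeMonoid.of (Sigma4.b 2))) * iotaFG Γ (f (FreeMonoid.of (Sigma4.a 1)))) * (iotaFG Γ (f (FreeMonoid.of (Sigma4.b 0))) * iotaFG Γ (f (FreeMonoid.of (Sigma4.bbar 0))) * (iotaFG Γ (f (FreeMonoid.of (Sigma4.a 0))) * iotaFG Γ (f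 (FreeMonoid.of (Sigma4.abar 0))))⁻¹) * (iotaFG Γ (f (FreeMonoid.of (Sigma4.b 2))) * iotaFG Γ (f (FreeMonoid.of (Sigma4.a 1))))⁻¹ := by group
      rwa [hq] at cw
    have cbig := my_step3 _ _ _ _ _ cu' cv' cw'
    have cgoal : Commute (((iotaFG Γ (f (FreeMonoid.of (Sigma4.b 3))))⁻¹ * (iotaFG Γ (g (FreeMonoid.of (Sigma4.b 3)))) * (iotaFG Γ (g (FreeMonoid.of (Sigma4.a 3))))⁻¹ * (iotaFG Γ (f (FreeMonoid.of (Sigma4.a 3)))))) ((iotaFG Γ (f (FreeMonoid.of (Sigma4.b 2))) * iotaFG Γ (f (FreeMonoid.of (Sigma4.b 1))) * iotaFG Γ (f (FreeMonoid.of (Sigma4.b 0))) * iotaFG Γ (f (FreeMonoid.of (Sigma4.bbar 0))) * iotaFG Γ (f (FreeMonoid.of (Sigma4.bbar 1))) * iotaFG Γ (f (FreeMonoid.of (Sigma4.bbar 2)))) * (iotaFG Γ (f (FreeMonoid.of (Sigma4.b 2))) * iotaFG Γ (f (FreeMonoid.of (Sigma4.b 1))) * iotaFG Γ (f (FreeMonoid.of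 (Sigma4.a 0))) * iotaFG Γ (f (FreeMonoid.of (Sigma4.abar 0))) * iotaFG Γ (f (FreeMonoid.of (Sigma4.bbar 1))) * iotaFG Γ (f (FreeMonoid.of (Sigma4.bbar 2))))⁻¹) := by
      have hq : ((iotaFG Γ (f (FreeMonoid.of (Sigma4.b 2))) * iotaFG Γ (f (FreeMonoid.of (Sigma4.a 1)))) * (iotaFG Γ (f (FreeMonoid.of (Sigma4.a 2))) * iotaFG Γ (f (FreeMonoid.of (Sigma4.a 1))))⁻¹ * (iotaFG Γ (f (FreeMonoid.of (Sigma4.a 2))) * iotaFG Γ (f (FreeMonoid.of (Sigma4.b 1))))) * (iotaFG Γ (f (FreeMonoid.of (Sigma4.b 0))) * iotaFG Γ (f (FreeMonoid.of (Sigma4.bbar 0))) * (iotaFG Γ (f (FreeMonoid.of (Sigma4.a 0))) * iotaFG Γ (f (FreeMonoid.of (Sigma4.abar 0))))⁻¹) * ((iotaFG Γ (f (FreeMonoid.of (Sigma4.a 2))) * iotaFG Γ (f (FreeMonoid.of (Sigma4.b 1))))⁻¹ * (iotaFG Γ (f (FreeMonoid.of (Sigma4.a 2))) * iotaFG Γ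 (f (FreeMonoid.of (Sigma4.a 1)))) * (iotaFG Γ (f (FreeMonoid.of (Sigma4.b 2))) * iotaFG Γ (f (FreeMonoid.of (Sigma4.a 1))))⁻¹) = (iotaFG Γ (f (FreeMonoid.of (Sigma4.b 2))) * iotaFG Γ (f (FreeMonoid.of (Sigma4.b 1))) * iotaFG Γ (f (FreeMonoid.of (Sigma4.b 0))) * iotaFG Γ (f (FreeMonoid.of (Sigma4.bbar 0))) * iotaFG Γ (f (FreeMonoid.of (Sigma4.bbar 1))) * iotaFG Γ (f (FreeMonoid.of (Sigma4.bbar 2)))) * (iotaFG Γ (f (FreeMonoid.of (Sigma4.b 2))) * iotaFG Γ (f (FreeMonoid.of (Sigma4.b 1))) * iotaFG Γ (f (FreeMonoid.of (Sigma4.a 0))) * iotaFG Γ (f (FreeMonoid.of (Sigma4.abar 0))) * iotaFG Γ (f (FreeMonoid.of (Sigma4.bbar 1))) * iotaFG Γ (f (FreeMonoid.of (Sigma4.bbar 2))))⁻¹ := by group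
      rwa [hq] at cbig
    have kgoal := my_step2' (h' := k_fft) (hc := cgoal)
    have final := my_step4 (ha := ea_fff) (hrs := kgoal)

    apply iotaFG_injective Γ
    rw [expand f _, expand g _]
    simpa only [xLetter, xbarLetter, if_false, Bool.false_eq_true, mul_assoc] using final
  · exact hT _ ⟨⟨c, rfl⟩, fun hh => hc (word4_inj hh)⟩
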